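/- arXiv:2205.10928 — 3 statements merged into one kernel-verified Lean document; each statement's English description precedes it below -/
import Mathlib

section
/- Let f : ℍ → ℍ be an ℝ-linear isometric bijection of the quaternions (viewed as the 4-dimensional real inner product space ℝ⁴) whose determinant as an ℝ-linear endomorphism equals 1. Then there exist unit quaternions p and q such that f(w) = p * w * q⁻¹ for all w ∈ ℍ. (That is, the map Π from pairs of unit quaternions to SO₄ given by Π(p,q)(w) = p w q⁻¹ is surjective.) -/
open Quaternion

noncomputable section
namespace QRotAux


/-- The reflection `w ↦ -(a * star w * a)`. -/
def rho (a : ℍ) : ℍ →ₗ[ℝ] ℍ where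
  toFun w := -(a * star w * a)
  map_add' x y := by simp [star_add, mul_add, add_mul]; abel
  map_smul' r x := by simp [Quaternion.star_smul, mul_smul_comm, smul_mul_assoc]

lemma rho_apply (a w : ℍ) : rho a w = -(a * star w * a) := rfl

lemma normSq_of_norm_one {a : ℍ} (ha : ‖a‖ = 1) : normSq a = 1 := by
  rw [Quaternion.normSq_eq_norm_mul_self, ha, one_mul]

lemma rho_norm {a : ℍ} (ha : ‖a‖ = 1) (w : ℍ) : ‖rho a w‖ = ‖w‖ := by
  simp [rho_apply, norm_mul, Quaternion.norm_star, ha]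

lemma rho_invol {a : ℍ} (ha : ‖a‖ = 1) (w : ℍ) : rho a (rho a w) = w := by
  have h1 : ((normSq a : ℝ) : ℍ) = 1 := by rw [normSq_of_norm_one ha]; exact_mod_cast rfl
  simp only [rho_apply, star_neg, star_mul, star_star, neg_neg, neg_mul, mul_neg]
  calc a * (star a * (w * star a)) * a
      = (a * star a) * w * (star a * a) := by
        simp only [mul_assoc]
    _ = w := by rw [Quaternion.self_mul_star, Quaternion.star_mul_self, h1, one_mul, mul_one]

lemma re_mul_star_comm (x y : ℍ) : (x * star y).re = (y * star x).re := by
  have h : y * star x = star (x * star y) := by rw [star_mul, star_star]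
  rw [h, Quaternion.re_star]

lemma rho_fixed {a v : ℍ} (ha : ‖a‖ = 1) (h : (v * star a).re = 0) : rho a v = v := by
  have h1 : ((normSq a : ℝ) : ℍ) = 1 := by rw [normSq_of_norm_one ha]; exact_mod_cast rfl
  have horth : a * star v = -(v * star a) := by
    have h2 := Quaternion.self_add_star' (v * star a)
    rw [h, mul_zero] at h2
    have h3 : star (v * star a) = a * star v := by rw [star_mul, star_star]
    rw [← h3]
    have : ((0 : ℝ) : ℍ) = 0 := by exact_mod_cast rfl
    rw [this] at h2
    exact eq_neg_of_add_eq_zero_right h2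
  rw [rho_apply, horth]
  calc -(-(v * star a) * a) = v * (star a * a) := by simp [mul_assoc]
    _ = v := by rw [Quaternion.star_mul_self, h1, mul_one]

lemma key_identity {u v : ℍ} (h : normSq u = normSq v) :
    (u - v) * star u * (u - v) = -(((normSq (u - v) : ℝ) : ℍ) * v) := by
  have h1 : (u - v) * star u = ((normSq u : ℝ) : ℍ) - v * star u := by
    rw [sub_mul, Quaternion.self_mul_star]
  have h2 : ((normSq u : ℝ) : ℍ) = v * star v := by rw [h, Quaternion.self_mul_star]
  calc (u - v) * star u * (u - v)
      = (v * star v - v * star u) * (u - v) := by rw [h1, h2]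
    _ = -(v * (star (u - v) * (u - v))) := by
        simp only [star_sub, mul_sub, sub_mul, mul_assoc]
        abel
    _ = -(v * ((normSq (u - v) : ℝ) : ℍ)) := by rw [Quaternion.star_mul_self]
    _ = -(((normSq (u - v) : ℝ) : ℍ) * v) := by rw [Quaternion.coe_commutes]

lemma rho_map {u v : ℍ} (hne : u ≠ v) (h : normSq u = normSq v) :
    rho (‖u - v‖⁻¹ • (u - v)) u = v := by
  have hnz : u - v ≠ 0 := sub_ne_zero.mpr hne
  have hnn : ‖u - v‖ ≠ 0 := norm_ne_zero_iff.mpr hnz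
  rw [rho_apply]
  rw [smul_mul_assoc, mul_smul_comm, smul_mul_assoc, smul_smul]
  rw [key_identity h]
  rw [smul_neg, neg_neg, Quaternion.coe_mul_eq_smul, smul_smul]
  rw [Quaternion.normSq_eq_norm_mul_self]
  field_simp
  rw [one_smul]

lemma polar {h : ℍ →ₗ[ℝ] ℍ} (hiso : ∀ w, ‖h w‖ = ‖w‖) (x y : ℍ) :
    (h x * star (h y)).re = (x * star y).re := by
  have li : ℍ →ₗᵢ[ℝ] ℍ := ⟨h, hiso⟩
  have := LinearIsometry.inner_map_map (𝕜 := ℝ) ⟨h, hiso⟩ x y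
  simpa [Quaternion.inner_def] using this

/-- rotation form -/
def Rot (g : ℍ →ₗ[ℝ] ℍ) : Prop :=
  ∃ p q : ℍ, ‖p‖ = 1 ∧ ‖q‖ = 1 ∧ ∀ w, g w = p * w * q⁻¹

/-- anti-rotation form -/
def ARot (g : ℍ →ₗ[ℝ] ℍ) : Prop :=
  ∃ p q : ℍ, ‖p‖ = 1 ∧ ‖q‖ = 1 ∧ ∀ w, g w = p * star w * q⁻¹

lemma rot_id : Rot LinearMap.id :=
  ⟨1, 1, norm_one, norm_one, fun w => by simp⟩

lemma arot_rho {a : ℍ} (ha : ‖a‖ = 1) : ARot (rho a) := by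
  refine ⟨-a, a⁻¹, by simpa using ha, by simpa using ha, fun w => ?_⟩
  rw [rho_apply, inv_inv]
  simp [mul_assoc]

lemma rot_comp_rho {a : ℍ} {g : ℍ →ₗ[ℝ] ℍ} (ha : ‖a‖ = 1) (hg : Rot g) :
    ARot ((rho a).comp g) := by
  obtain ⟨p, q, hp, hq, hpq⟩ := hg
  refine ⟨-(a * (star q)⁻¹), (star p * a)⁻¹, ?_, ?_, fun w => ?_⟩
  · simp [norm_mul, Quaternion.norm_star, ha, hp, hq]
  · simp [norm_mul, Quaternion.norm_star, ha, hp, hq]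
  · rw [LinearMap.comp_apply, rho_apply, hpq w, inv_inv]
    rw [star_mul, star_mul, star_inv₀, mul_assoc, mul_assoc, mul_assoc, mul_assoc]
    simp [mul_assoc]

lemma arot_comp_rho {a : ℍ} {g : ℍ →ₗ[ℝ] ℍ} (ha : ‖a‖ = 1) (hg : ARot g) :
    Rot ((rho a).comp g) := by
  obtain ⟨p, q, hp, hq, hpq⟩ := hg
  refine ⟨-(a * (star q)⁻¹), (star p * a)⁻¹, ?_, ?_, fun w => ?_⟩
  · simp [norm_mul, Quaternion.norm_star, ha, hp, hq]
  · simp [norm_mul, Quaternion.norm_star, ha, hp, hq]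
  · rw [LinearMap.comp_apply, rho_apply, hpq w, inv_inv]
    rw [star_mul, star_mul, star_inv₀, star_star, mul_assoc, mul_assoc, mul_assoc, mul_assoc]
    simp [mul_assoc]


def B : Module.Basis (Fin 4) ℝ ℍ := QuaternionAlgebra.basisOneIJK (-1 : ℝ) 0 (-1)
def qi : ℍ := ⟨0,1,0,0⟩
def qj : ℍ := ⟨0,0,1,0⟩
def qk : ℍ := ⟨0,0,0,1⟩

lemma B_components (j : Fin 4) :
    ![(B j).re, (B j).imI, (B j).imJ, (B j).imK] = fun i => if j = i then (1:ℝ) else 0 := by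
  have h : ⇑(B.repr (B j)) = ![(B j).re, (B j).imI, (B j).imJ, (B j).imK] :=
    QuaternionAlgebra.coe_basisOneIJK_repr (-1) 0 (-1) _
  rw [Module.Basis.repr_self] at h
  rw [← h]
  ext i
  simp [Finsupp.single_apply]

lemma B0 : B 0 = 1 := by
  have h := B_components 0
  ext
  · simpa using congrFun h 0
  · simpa using congrFun h 1
  · simpa using congrFun h 2
  · simpa using congrFun h 3
lemma B1 : B 1 = qi := by
  have h := B_components 1
  ext
  · simpa [qi] using congrFun h 0
  · simpa [qi] using congrFun h 1
  · simpa [qi] using congrFun h 2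
  · simpa [qi] using congrFun h 3
lemma B2 : B 2 = qj := by
  have h := B_components 2
  ext
  · simpa [qj] using congrFun h 0
  · simpa [qj] using congrFun h 1
  · simpa [qj] using congrFun h 2
  · simpa [qj] using congrFun h 3
lemma B3 : B 3 = qk := by
  have h := B_components 3
  ext
  · simpa [qk] using congrFun h 0
  · simpa [qk] using congrFun h 1
  · simpa [qk] using congrFun h 2
  · simpa [qk] using congrFun h 3

lemma toMatrix_entry (g : ℍ →ₗ[ℝ] ℍ) (i j : Fin 4) :
    LinearMap.toMatrix B B g i j
      = ![(g (B j)).re, (g (B j)).imI, (g (B j)).imJ, (g (B j)).imK] i := by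
  rw [LinearMap.toMatrix_apply, ← QuaternionAlgebra.coe_basisOneIJK_repr (-1) 0 (-1) (g (B j))]
  rfl

lemma det_mulLeft (p : ℍ) :
    LinearMap.det (LinearMap.mulLeft ℝ p) = normSq p ^ 2 := by
  rw [← LinearMap.det_toMatrix B]
  have hm : LinearMap.toMatrix B B (LinearMap.mulLeft ℝ p) =
      !![p.re, -p.imI, -p.imJ, -p.imK;
         p.imI, p.re, -p.imK, p.imJ;
         p.imJ, p.imK, p.re, -p.imI;
         p.imK, -p.imJ, p.imI, p.re] := by
    ext i j
    fin_cases j <;> rw [toMatrix_entry] <;>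
      fin_cases i <;>
      simp [B0, B1, B2, B3, LinearMap.mulLeft_apply,
        Quaternion.re_mul, Quaternion.imI_mul, Quaternion.imJ_mul, Quaternion.imK_mul] <;> simp [qi, qj, qk]
  rw [hm, Matrix.det_succ_row_zero, Quaternion.normSq_def']
  simp [Fin.sum_univ_succ, Matrix.det_fin_three, Matrix.submatrix, Fin.succAbove, Fin.castSucc, Fin.castAdd, Fin.castLE]
  ring

/-- star as a linear map -/
def conjL : ℍ →ₗ[ℝ] ℍ where
  toFun := star
  map_add' x y := by simp [star_add]
  map_smul' r x := by simp [Quaternion.star_smul]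

lemma conjL_apply (w : ℍ) : conjL w = star w := rfl

lemma det_conjL : LinearMap.det conjL = -1 := by
  rw [← LinearMap.det_toMatrix B]
  have hm : LinearMap.toMatrix B B conjL =
      !![1, 0, 0, 0; 0, -1, 0, 0; 0, 0, -1, 0; 0, 0, 0, -1] := by
    ext i j
    fin_cases j <;> rw [toMatrix_entry] <;>
      fin_cases i <;>
      simp [B0, B1, B2, B3, conjL_apply, Matrix.vecHead, Matrix.vecTail] <;> simp [qi, qj, qk]
  rw [hm, Matrix.det_succ_row_zero]
  simp [Fin.sum_univ_succ, Matrix.det_fin_three, Matrix.submatrix, Fin.succAbove,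
    Fin.castSucc, Fin.castAdd, Fin.castLE]

lemma mulRight_eq (x : ℍ) :
    LinearMap.mulRight ℝ x = conjL ∘ₗ (LinearMap.mulLeft ℝ (star x)) ∘ₗ conjL := by
  apply LinearMap.ext
  intro w
  simp [conjL_apply, LinearMap.mulRight_apply, LinearMap.mulLeft_apply, star_mul]

lemma det_mulRight (x : ℍ) :
    LinearMap.det (LinearMap.mulRight ℝ x) = normSq x ^ 2 := by
  rw [mulRight_eq, LinearMap.det_comp, LinearMap.det_comp, det_conjL, det_mulLeft,
    Quaternion.normSq_star]
  ring

lemma norm_one_of_normSq {x : ℍ} (h : normSq x = 1) : ‖x‖ = 1 := by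
  have h2 : ‖x‖ * ‖x‖ = 1 := by rw [← Quaternion.normSq_eq_norm_mul_self, h]
  rcases mul_self_eq_one_iff.mp h2 with h3 | h3
  · exact h3
  · nlinarith [norm_nonneg x]

lemma norm_qi : ‖qi‖ = 1 := norm_one_of_normSq (by rw [Quaternion.normSq_def']; simp [qi])
lemma norm_qj : ‖qj‖ = 1 := norm_one_of_normSq (by rw [Quaternion.normSq_def']; simp [qj])
lemma norm_qk : ‖qk‖ = 1 := norm_one_of_normSq (by rw [Quaternion.normSq_def']; simp [qk])

lemma arot_det {g : ℍ →ₗ[ℝ] ℍ} (h : ARot g) : LinearMap.det g = -1 := by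
  obtain ⟨p, q, hp, hq, hpq⟩ := h
  have hg : g = (LinearMap.mulLeft ℝ p) ∘ₗ (LinearMap.mulRight ℝ q⁻¹) ∘ₗ conjL := by
    apply LinearMap.ext; intro w
    simp [conjL_apply, LinearMap.mulLeft_apply, LinearMap.mulRight_apply, hpq w, mul_assoc]
  have hq' : ‖q⁻¹‖ = 1 := by rw [norm_inv, hq]; norm_num
  rw [hg, LinearMap.det_comp, LinearMap.det_comp, det_mulLeft, det_mulRight, det_conjL,
    normSq_of_norm_one hp, normSq_of_norm_one hq']
  norm_num

lemma step (h : ℍ →ₗ[ℝ] ℍ) (hiso : ∀ w, ‖h w‖ = ‖w‖) {n : ℕ} (fixed : Fin n → ℍ)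
    (hfix : ∀ s, h (fixed s) = fixed s) (t : ℍ) (ht : ‖t‖ = 1)
    (horth : ∀ s, (t * star (fixed s)).re = 0) :
    ∃ g : ℍ →ₗ[ℝ] ℍ, (∀ w, ‖g w‖ = ‖w‖) ∧ (∀ s, g (fixed s) = fixed s) ∧ g t = t ∧
      ((Rot g ∨ ARot g) → (Rot h ∨ ARot h)) := by
  by_cases hc : h t = t
  · exact ⟨h, hiso, hfix, hc, id⟩
  · set u := h t with hu_def
    have hu : ‖u‖ = 1 := by rw [hu_def, hiso, ht]
    set a := ‖u - t‖⁻¹ • (u - t) with ha_def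
    have hnz : u - t ≠ 0 := sub_ne_zero.mpr hc
    have hna : ‖u - t‖ ≠ 0 := norm_ne_zero_iff.mpr hnz
    have ha : ‖a‖ = 1 := by
      rw [ha_def, norm_smul, Real.norm_eq_abs, abs_inv, abs_norm]
      field_simp
    refine ⟨(rho a).comp h, ?_, ?_, ?_, ?_⟩
    · intro w; rw [LinearMap.comp_apply, rho_norm ha, hiso]
    · intro s
      rw [LinearMap.comp_apply, hfix s]
      apply rho_fixed ha
      have e1 : (fixed s * star u).re = 0 := by
        rw [re_mul_star_comm, hu_def]
        calc (h t * star (fixed s)).re = (h t * star (h (fixed s))).re := by rw [hfix s]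
          _ = (t * star (fixed s)).re := polar hiso t (fixed s)
          _ = 0 := horth s
      have e2 : (fixed s * star t).re = 0 := by rw [re_mul_star_comm]; exact horth s
      rw [ha_def, Quaternion.star_smul, mul_smul_comm, Quaternion.re_smul, star_sub, mul_sub,
        Quaternion.re_sub, e1, e2]
      simp
    · rw [LinearMap.comp_apply, ← hu_def]
      apply rho_map hc
      rw [Quaternion.normSq_eq_norm_mul_self, Quaternion.normSq_eq_norm_mul_self, hu, ht]
    · intro d
      have hcomp : h = (rho a).comp ((rho a).comp h) := by
        apply LinearMap.ext; intro w
        simp only [LinearMap.comp_apply]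
        rw [rho_invol ha]
      rcases d with r | r
      · right; rw [hcomp]; exact rot_comp_rho ha ((hcomp ▸ r : Rot _))
      · left; rw [hcomp]; exact arot_comp_rho ha ((hcomp ▸ r : ARot _))

lemma rho_qk_one : rho qk 1 = 1 := by
  rw [rho_apply]; ext <;> simp [Quaternion.re_mul, Quaternion.imI_mul, Quaternion.imJ_mul, Quaternion.imK_mul] <;> simp [qk]
lemma rho_qk_qi : rho qk qi = qi := by
  rw [rho_apply]; ext <;> simp [Quaternion.re_mul, Quaternion.imI_mul, Quaternion.imJ_mul, Quaternion.imK_mul] <;> simp [qk, qi]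
lemma rho_qk_qj : rho qk qj = qj := by
  rw [rho_apply]; ext <;> simp [Quaternion.re_mul, Quaternion.imI_mul, Quaternion.imJ_mul, Quaternion.imK_mul] <;> simp [qk, qj]
lemma rho_qk_qk : rho qk qk = -qk := by
  rw [rho_apply]; ext <;> simp [Quaternion.re_mul, Quaternion.imI_mul, Quaternion.imJ_mul, Quaternion.imK_mul] <;> simp [qk]

end QRotAux
end

open QRotAux in
/-- Every `ℝ`-linear isometric bijection of the quaternions with determinant `1`
is of the form `w ↦ p * w * q⁻¹` for some unit quaternions `p` and `q`:
the map `Π` from pairs of unit quaternions to `SO₄` is surjective. -/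
theorem quaternion_rotation_surjective
    (f : Quaternion ℝ →ₗ[ℝ] Quaternion ℝ)
    (hbij : Function.Bijective f)
    (hisom : ∀ w : Quaternion ℝ, ‖f w‖ = ‖w‖)
    (hdet : LinearMap.det f = 1) :
    ∃ p q : Quaternion ℝ, ‖p‖ = 1 ∧ ‖q‖ = 1 ∧
      ∀ w : Quaternion ℝ, f w = p * w * q⁻¹ := by
  -- Step 1: fix 1
  obtain ⟨g1, g1iso, -, g1one, tr1⟩ :=
    step f hisom (n := 0) ![] (fun s => s.elim0) 1 norm_one (fun s => s.elim0)
  -- Step 2: fix qi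
  obtain ⟨g2, g2iso, g2fix, g2qi, tr2⟩ :=
    step g1 g1iso (n := 1) ![1] (fun s => by fin_cases s <;> simpa using g1one) qi norm_qi
      (fun s => by fin_cases s <;> simp [Quaternion.re_mul] <;> simp [qi])
  -- Step 3: fix qj
  obtain ⟨g3, g3iso, g3fix, g3qj, tr3⟩ :=
    step g2 g2iso (n := 2) ![1, qi]
      (fun s => by
        fin_cases s
        · simpa using g2fix 0
        · simpa using g2qi)
      qj norm_qj
      (fun s => by fin_cases s <;> simp [Quaternion.re_mul] <;> simp [qi, qj])
  have g3one : g3 1 = 1 := by simpa using g3fix 0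
  have g3qi : g3 qi = qi := by simpa using g3fix 1
  -- the image of qk
  set v := g3 qk with hv_def
  have hvn : normSq v = 1 := by
    rw [Quaternion.normSq_eq_norm_mul_self, hv_def, g3iso, norm_qk]; norm_num
  have hv1 : v.re = 0 := by
    have := polar g3iso qk 1
    rw [g3one, ← hv_def] at this
    simp [Quaternion.re_mul] at this
    simpa [qk] using this
  have hvi : v.imI = 0 := by
    have := polar g3iso qk qi
    rw [g3qi, ← hv_def] at this
    simp [Quaternion.re_mul] at this
    simpa [qk, qi, Quaternion.re_mul] using this
  have hvj : v.imJ = 0 := by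
    have := polar g3iso qk qj
    rw [g3qj, ← hv_def] at this
    simp [Quaternion.re_mul] at this
    simpa [qk, qj, Quaternion.re_mul] using this
  have hvk : v.imK = 1 ∨ v.imK = -1 := by
    rw [Quaternion.normSq_def', hv1, hvi, hvj] at hvn
    rcases mul_self_eq_one_iff.mp (by nlinarith : v.imK * v.imK = 1) with h | h
    · exact Or.inl h
    · exact Or.inr h
  have main : Rot f ∨ ARot f := by
    apply tr1; apply tr2; apply tr3
    rcases hvk with h | h
    · -- g3 = id
      have hg3 : g3 = LinearMap.id := by
        apply Module.Basis.ext B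
        intro i
        fin_cases i
        · simpa [B0] using g3one
        · simpa [B1] using g3qi
        · simpa [B2] using g3qj
        · show g3 (B 3) = B 3
          rw [B3, ← hv_def]
          ext <;> simp [qk, hv1, hvi, hvj, h]
      left; rw [hg3]; exact rot_id
    · -- g3 = rho qk
      have hg3 : g3 = rho qk := by
        apply Module.Basis.ext B
        intro i
        fin_cases i
        · show g3 (B 0) = rho qk (B 0)
          rw [B0, g3one, rho_qk_one]
        · show g3 (B 1) = rho qk (B 1)
          rw [B1, g3qi, rho_qk_qi]
        · show g3 (B 2) = rho qk (B 2)
          rw [B2, g3qj, rho_qk_qj]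
        · show g3 (B 3) = rho qk (B 3)
          rw [B3, rho_qk_qk, ← hv_def]
          ext <;> simp [hv1, hvi, hvj, h] <;> simp [qk]
      right; rw [hg3]; exact arot_rho norm_qk
  rcases main with h | h
  · exact h
  · exfalso
    have := arot_det h
    rw [hdet] at this
    norm_num at this
end

section
/- In the group of pairs of unit quaternions (with componentwise multiplication), define á₁ = ((1+i)/√2, (1-i)/√2), á₂ = ((1+k)/√2, (1-k)/√2), á₃ = ((1+i)/√2, (1+i)/√2). Then these elements satisfy the braid relations á₁ á₂ á₁ = á₂ á₁ á₂, á₂ á₃ á₂ = á₃ á₂ á₃, and á₁ á₃ = á₃ á₁; moreover á₁² = (i, -i), á₂² = (k, -k), and á₃² = (i, i). -/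
/-- The imaginary unit `i` of the quaternions. -/
noncomputable def qi : Quaternion ℝ := ⟨0, 1, 0, 0⟩

/-- The imaginary unit `k` of the quaternions. -/
noncomputable def qk : Quaternion ℝ := ⟨0, 0, 0, 1⟩

/-- `á₁ = ((1+i)/√2, (1-i)/√2)`. -/
noncomputable def aacute₁ : Quaternion ℝ × Quaternion ℝ :=
  ((1 + qi) / ((Real.sqrt 2 : ℝ) : Quaternion ℝ),
   (1 - qi) / ((Real.sqrt 2 : ℝ) : Quaternion ℝ))

/-- `á₂ = ((1+k)/√2, (1-k)/√2)`. -/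
noncomputable def aacute₂ : Quaternion ℝ × Quaternion ℝ :=
  ((1 + qk) / ((Real.sqrt 2 : ℝ) : Quaternion ℝ),
   (1 - qk) / ((Real.sqrt 2 : ℝ) : Quaternion ℝ))

/-- `á₃ = ((1+i)/√2, (1+i)/√2)`. -/
noncomputable def aacute₃ : Quaternion ℝ × Quaternion ℝ :=
  ((1 + qi) / ((Real.sqrt 2 : ℝ) : Quaternion ℝ),
   (1 + qi) / ((Real.sqrt 2 : ℝ) : Quaternion ℝ))

private lemma sq2_mul : ((Real.sqrt 2 : ℝ) : Quaternion ℝ) * ((Real.sqrt 2 : ℝ) : Quaternion ℝ) = 2 := by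
  rw [← Quaternion.coe_mul, Real.mul_self_sqrt (by norm_num)]
  norm_cast

private lemma dmd (a b : Quaternion ℝ) :
    a / ((Real.sqrt 2 : ℝ) : Quaternion ℝ) * (b / ((Real.sqrt 2 : ℝ) : Quaternion ℝ))
      = (a * b) / 2 := by
  set s : Quaternion ℝ := ((Real.sqrt 2 : ℝ) : Quaternion ℝ) with hsdef
  have hcomm : s⁻¹ * b = b * s⁻¹ := by
    rw [hsdef, ← Quaternion.coe_inv, Quaternion.coe_commutes]
  rw [div_eq_mul_inv, div_eq_mul_inv, mul_assoc, ← mul_assoc s⁻¹ b, hcomm,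
    mul_assoc, ← mul_inv_rev, sq2_mul, ← mul_assoc, ← div_eq_mul_inv]


private lemma coe_two : ((2 : ℝ) : Quaternion ℝ) = 2 := by
  norm_cast

private lemma d2md (a b : Quaternion ℝ) :
    a / 2 * (b / ((Real.sqrt 2 : ℝ) : Quaternion ℝ))
      = (a * b) / (2 * ((Real.sqrt 2 : ℝ) : Quaternion ℝ)) := by
  set s : Quaternion ℝ := ((Real.sqrt 2 : ℝ) : Quaternion ℝ) with hsdef
  have hb : (2 : Quaternion ℝ)⁻¹ * b = b * 2⁻¹ := by
    rw [← coe_two, ← Quaternion.coe_inv, Quaternion.coe_commutes]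
  have hswap : (2 : Quaternion ℝ)⁻¹ * s⁻¹ = s⁻¹ * 2⁻¹ := by
    rw [← coe_two, ← Quaternion.coe_inv, Quaternion.coe_commutes]
  rw [div_eq_mul_inv, div_eq_mul_inv, div_eq_mul_inv, mul_inv_rev, mul_assoc,
    ← mul_assoc (2 : Quaternion ℝ)⁻¹ b, hb, mul_assoc, hswap, ← mul_assoc, ← mul_assoc]


private lemma braid12a : (1 + qi) * (1 + qk) * (1 + qi) = (1 + qk) * (1 + qi) * (1 + qk) := by
  ext <;> simp [Quaternion.re_one, Quaternion.imI_one, Quaternion.imJ_one, Quaternion.imK_one] <;> simp [qi, qk] <;> ring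

private lemma braid12b : (1 - qi) * (1 - qk) * (1 - qi) = (1 - qk) * (1 - qi) * (1 - qk) := by
  ext <;> simp [Quaternion.re_one, Quaternion.imI_one, Quaternion.imJ_one, Quaternion.imK_one] <;> simp [qi, qk] <;> ring

private lemma braid23a : (1 + qk) * (1 + qi) * (1 + qk) = (1 + qi) * (1 + qk) * (1 + qi) := by
  ext <;> simp [Quaternion.re_one, Quaternion.imI_one, Quaternion.imJ_one, Quaternion.imK_one] <;> simp [qi, qk] <;> ring

private lemma braid23b : (1 - qk) * (1 + qi) * (1 - qk) = (1 + qi) * (1 - qk) * (1 + qi) := by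
  ext <;> simp [Quaternion.re_one, Quaternion.imI_one, Quaternion.imJ_one, Quaternion.imK_one] <;> simp [qi, qk] <;> ring

private lemma comm13 : (1 - qi) * (1 + qi) = (1 + qi) * (1 - qi) := by
  ext <;> simp [Quaternion.re_one, Quaternion.imI_one, Quaternion.imJ_one, Quaternion.imK_one] <;> simp [qi] <;> ring

private lemma sq_pi : (1 + qi) * (1 + qi) = qi + qi := by
  ext <;> simp [Quaternion.re_one, Quaternion.imI_one, Quaternion.imJ_one, Quaternion.imK_one] <;> simp [qi] <;> ring

private lemma sq_mi : (1 - qi) * (1 - qi) = -qi + -qi := by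
  ext <;> simp [Quaternion.re_one, Quaternion.imI_one, Quaternion.imJ_one, Quaternion.imK_one] <;> simp [qi] <;> ring

private lemma sq_pk : (1 + qk) * (1 + qk) = qk + qk := by
  ext <;> simp [Quaternion.re_one, Quaternion.imI_one, Quaternion.imJ_one, Quaternion.imK_one] <;> simp [qk] <;> ring

private lemma sq_mk : (1 - qk) * (1 - qk) = -qk + -qk := by
  ext <;> simp [Quaternion.re_one, Quaternion.imI_one, Quaternion.imJ_one, Quaternion.imK_one] <;> simp [qk] <;> ring

/-- The elements `á₁, á₂, á₃` of `S³ × S³` satisfy the braid relations, and their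
squares are `â = (i,-i)`, `b̂ = (k,-k)`, `ĉ = (i,i)` respectively. -/
theorem aacute_braid_relations :
    aacute₁ * aacute₂ * aacute₁ = aacute₂ * aacute₁ * aacute₂ ∧
    aacute₂ * aacute₃ * aacute₂ = aacute₃ * aacute₂ * aacute₃ ∧
    aacute₁ * aacute₃ = aacute₃ * aacute₁ ∧
    aacute₁ ^ 2 = (qi, -qi) ∧
    aacute₂ ^ 2 = (qk, -qk) ∧
    aacute₃ ^ 2 = (qi, qi) := by
  have h20 : (2 : Quaternion ℝ) ≠ 0 := by
    rw [← coe_two, ← Quaternion.coe_zero, Ne, Quaternion.coe_inj]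
    norm_num
  have braid : ∀ a b : Quaternion ℝ, a * b * a = b * a * b →
      a / ((Real.sqrt 2 : ℝ) : Quaternion ℝ) * (b / ((Real.sqrt 2 : ℝ) : Quaternion ℝ)) *
        (a / ((Real.sqrt 2 : ℝ) : Quaternion ℝ))
      = b / ((Real.sqrt 2 : ℝ) : Quaternion ℝ) * (a / ((Real.sqrt 2 : ℝ) : Quaternion ℝ)) *
        (b / ((Real.sqrt 2 : ℝ) : Quaternion ℝ)) := by
    intro a b h
    rw [dmd, dmd, d2md, d2md, h]
  have sqr : ∀ a c : Quaternion ℝ, a * a = c + c →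
      a / ((Real.sqrt 2 : ℝ) : Quaternion ℝ) * (a / ((Real.sqrt 2 : ℝ) : Quaternion ℝ)) = c := by
    intro a c h
    rw [dmd, h, ← mul_two, mul_div_cancel_right₀ _ h20]
  refine ⟨?_, ?_, ?_, ?_, ?_, ?_⟩ <;>
    simp only [aacute₁, aacute₂, aacute₃, Prod.mk_mul_mk, Prod.mk.injEq, pow_two]
  · exact ⟨braid _ _ braid12a, braid _ _ braid12b⟩
  · exact ⟨braid _ _ braid23a, braid _ _ braid23b⟩
  · refine ⟨trivial, ?_⟩
    rw [dmd, dmd, comm13]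
  · exact ⟨sqr _ _ sq_pi, sqr _ _ sq_mi⟩
  · exact ⟨sqr _ _ sq_pk, sqr _ _ sq_mk⟩
  · exact ⟨sqr _ _ sq_pi, sqr _ _ sq_pi⟩
end

section
/- Let x₁, x₂, x₃, x₄ ∈ ℝ and let M be the 4×4 real matrix with rows (0,1,0,0), (1,0,0,0), (x₁,x₂,0,1), (x₃,x₄,1,0). Say that M lies in the Bruhat cell of a permutation ρ of {1,2,3,4} if there exist invertible upper triangular real matrices U₀, U₁ with M = U₀ P_ρ U₁, where P_ρ is the matrix whose (j, ρ(j)) entries are 1 and all other entries 0. Then: (a) M lies in the Bruhat cell of the permutation ρ₀ = (1 2)(3 4) if and only if x₁ = x₂ = x₃ = x₄ = 0; (b) M lies in the Bruhat cell of the 4-cycle ρ₁ defined by 1↦4, 2↦1, 3↦2, 4↦3 if and only if x₁ = x₃ = x₄ = 0 and x₂ ≠ 0; (c) M lies in the Bruhat cell of the 4-cycle ρ₂ defined by 1↦2, 2↦3, 3↦4, 4↦1 if and only if x₁ = x₂ = x₄ = 0 and x₃ ≠ 0. -/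
/-- A square matrix is upper triangular if all entries below the diagonal vanish. -/
def IsUpperTriangular (U : Matrix (Fin 4) (Fin 4) ℝ) : Prop :=
  ∀ i j : Fin 4, j < i → U i j = 0

/-- The permutation matrix of `ρ`: its `(j, ρ j)` entries are `1` and all other
entries are `0`. -/
def permMatrix (ρ : Equiv.Perm (Fin 4)) : Matrix (Fin 4) (Fin 4) ℝ :=
  Matrix.of fun i j => if j = ρ i then 1 else 0

/-- `M` lies in the Bruhat cell of `ρ` if `M = U₀ P_ρ U₁` for some invertible
upper triangular `U₀`, `U₁`. -/
def InBruhatCell (M : Matrix (Fin 4) (Fin 4) ℝ) (ρ : Equiv.Perm (Fin 4)) : Prop :=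
  ∃ U₀ U₁ : Matrix (Fin 4) (Fin 4) ℝ,
    IsUnit U₀ ∧ IsUnit U₁ ∧ IsUpperTriangular U₀ ∧ IsUpperTriangular U₁ ∧
    M = U₀ * permMatrix ρ * U₁

lemma pm0' : permMatrix (Equiv.swap (0 : Fin 4) 1 * Equiv.swap (2 : Fin 4) 3)
    = !![0,1,0,0;1,0,0,0;0,0,0,1;0,0,1,0] := by
  ext i j
  fin_cases i <;> fin_cases j <;>
    simp [permMatrix, Matrix.vecHead, Matrix.vecTail] <;> simp [Equiv.swap_apply_def]

lemma pm1' : permMatrix (finRotate 4)⁻¹ = !![0,0,0,1;1,0,0,0;0,1,0,0;0,0,1,0] := by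
  ext i j
  fin_cases i <;> fin_cases j <;>
    simp [permMatrix, Matrix.vecHead, Matrix.vecTail,
      show (finRotate 4)⁻¹ (0:Fin 4) = 3 from by decide,
      show (finRotate 4)⁻¹ (1:Fin 4) = 0 from by decide,
      show (finRotate 4)⁻¹ (2:Fin 4) = 1 from by decide,
      show (finRotate 4)⁻¹ (3:Fin 4) = 2 from by decide] <;> decide

lemma pm2' : permMatrix (finRotate 4) = !![0,1,0,0;0,0,1,0;0,0,0,1;1,0,0,0] := by
  ext i j
  fin_cases i <;> fin_cases j <;>
    simp [permMatrix, Matrix.vecHead, Matrix.vecTail,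
      show (finRotate 4) (0:Fin 4) = 1 from by decide,
      show (finRotate 4) (1:Fin 4) = 2 from by decide,
      show (finRotate 4) (2:Fin 4) = 3 from by decide,
      show (finRotate 4) (3:Fin 4) = 0 from by decide]

lemma fwd_a (x₁ x₂ x₃ x₄ : ℝ)
    (h : InBruhatCell !![0, 1, 0, 0; 1, 0, 0, 0; x₁, x₂, 0, 1; x₃, x₄, 1, 0]
      (Equiv.swap (0 : Fin 4) 1 * Equiv.swap (2 : Fin 4) 3)) :
    x₁ = 0 ∧ x₂ = 0 ∧ x₃ = 0 ∧ x₄ = 0 := by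
  obtain ⟨U₀, U₁, hu0, hu1, ht0, ht1, hM⟩ := h
  rw [pm0'] at hM
  have a20 : U₀ 2 0 = 0 := ht0 2 0 (by decide)
  have a21 : U₀ 2 1 = 0 := ht0 2 1 (by decide)
  have a30 : U₀ 3 0 = 0 := ht0 3 0 (by decide)
  have a31 : U₀ 3 1 = 0 := ht0 3 1 (by decide)
  have a32 : U₀ 3 2 = 0 := ht0 3 2 (by decide)
  have b20 : U₁ 2 0 = 0 := ht1 2 0 (by decide)
  have b21 : U₁ 2 1 = 0 := ht1 2 1 (by decide)
  have b30 : U₁ 3 0 = 0 := ht1 3 0 (by decide)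
  have b31 : U₁ 3 1 = 0 := ht1 3 1 (by decide)
  have E : ∀ i j : Fin 4, _ := fun i j => congrFun (congrFun hM i) j
  have e20 := E 2 0
  have e21 := E 2 1
  have e30 := E 3 0
  have e31 := E 3 1
  simp [Matrix.mul_apply, Fin.sum_univ_four, Matrix.vecHead, Matrix.vecTail,
    a20, a21, a30, a31, a32, b20, b21, b30, b31] at e20 e21 e30 e31
  exact ⟨e20, e21, e30, e31⟩

lemma bwd_a :
    InBruhatCell !![0, 1, 0, 0; 1, 0, 0, 0; 0, 0, 0, 1; 0, 0, 1, 0]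
      (Equiv.swap (0 : Fin 4) 1 * Equiv.swap (2 : Fin 4) 3) := by
  refine ⟨1, 1, isUnit_one, isUnit_one,
    fun i j h => Matrix.one_apply_ne (ne_of_gt h),
    fun i j h => Matrix.one_apply_ne (ne_of_gt h), ?_⟩
  rw [pm0', Matrix.one_mul, Matrix.mul_one]

lemma fwd_b (x₁ x₂ x₃ x₄ : ℝ)
    (h : InBruhatCell !![0, 1, 0, 0; 1, 0, 0, 0; x₁, x₂, 0, 1; x₃, x₄, 1, 0]
      (finRotate 4)⁻¹) :
    x₁ = 0 ∧ x₃ = 0 ∧ x₄ = 0 ∧ x₂ ≠ 0 := by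
  obtain ⟨U₀, U₁, hu0, hu1, ht0, ht1, hM⟩ := h
  rw [pm1'] at hM
  have a20 : U₀ 2 0 = 0 := ht0 2 0 (by decide)
  have a21 : U₀ 2 1 = 0 := ht0 2 1 (by decide)
  have a30 : U₀ 3 0 = 0 := ht0 3 0 (by decide)
  have a31 : U₀ 3 1 = 0 := ht0 3 1 (by decide)
  have a32 : U₀ 3 2 = 0 := ht0 3 2 (by decide)
  have b10 : U₁ 1 0 = 0 := ht1 1 0 (by decide)
  have b20 : U₁ 2 0 = 0 := ht1 2 0 (by decide)
  have b21 : U₁ 2 1 = 0 := ht1 2 1 (by decide)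
  have b30 : U₁ 3 0 = 0 := ht1 3 0 (by decide)
  have b31 : U₁ 3 1 = 0 := ht1 3 1 (by decide)
  have E : ∀ i j : Fin 4, _ := fun i j => congrFun (congrFun hM i) j
  have e20 := E 2 0
  have e30 := E 3 0
  have e31 := E 3 1
  have e32 := E 3 2
  have e33 := E 3 3
  have e23 := E 2 3
  have e10 := E 1 0
  have e00 := E 0 0
  have e01 := E 0 1
  have e21 := E 2 1
  simp [Matrix.mul_apply, Fin.sum_univ_four, Matrix.vecHead, Matrix.vecTail,
    a20, a21, a30, a31, a32, b10, b20, b21, b30, b31]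
    at e20 e30 e31 e32 e33 e23 e10 e00 e01 e21
  -- e32 : 1 = U₀ 3 3 * U₁ 2 2
  have ha33 : U₀ 3 3 ≠ 0 := left_ne_zero_of_mul_eq_one e32.symm
  -- e33 : U₀ 3 3 = 0 ∨ U₁ 2 3 = 0
  have hb23 : U₁ 2 3 = 0 := e33.resolve_left ha33
  rw [hb23, mul_zero, add_zero] at e23
  -- e23 : 1 = U₀ 2 2 * U₁ 1 3
  have ha22 : U₀ 2 2 ≠ 0 := left_ne_zero_of_mul_eq_one e23.symm
  -- e10 : 1 = U₀ 1 1 * U₁ 0 0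
  have hb00 : U₁ 0 0 ≠ 0 := right_ne_zero_of_mul_eq_one e10.symm
  -- e00 : U₀ 0 1 = 0 ∨ U₁ 0 0 = 0
  have ha01 : U₀ 0 1 = 0 := e00.resolve_right hb00
  rw [ha01, zero_mul, zero_add] at e01
  -- e01 : 1 = U₀ 0 2 * U₁ 1 1
  have hb11 : U₁ 1 1 ≠ 0 := right_ne_zero_of_mul_eq_one e01.symm
  refine ⟨e20, e30, e31, ?_⟩
  rw [e21]
  exact mul_ne_zero ha22 hb11

lemma bwd_b (x₂ : ℝ) (hx₂ : x₂ ≠ 0) :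
    InBruhatCell !![0, 1, 0, 0; 1, 0, 0, 0; 0, x₂, 0, 1; 0, 0, 1, 0]
      (finRotate 4)⁻¹ := by
  refine ⟨!![1,0,x₂⁻¹,0;0,1,0,0;0,0,1,0;0,0,0,1],
    !![1,0,0,0;0,x₂,0,1;0,0,1,0;0,0,0,-x₂⁻¹], ?_, ?_, ?_, ?_, ?_⟩
  · apply (Matrix.isUnit_iff_isUnit_det _).mpr <| Matrix.isUnit_det_of_right_inverse ?_
      (B := !![1,0,-x₂⁻¹,0;0,1,0,0;0,0,1,0;0,0,0,1])
    ext i j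
    fin_cases i <;> fin_cases j <;>
      simp [Matrix.mul_apply, Fin.sum_univ_four, Matrix.one_apply,
        Matrix.vecHead, Matrix.vecTail]
  · apply (Matrix.isUnit_iff_isUnit_det _).mpr <| Matrix.isUnit_det_of_right_inverse ?_
      (B := !![1,0,0,0;0,x₂⁻¹,0,1;0,0,1,0;0,0,0,-x₂])
    ext i j
    fin_cases i <;> fin_cases j <;>
      simp [Matrix.mul_apply, Fin.sum_univ_four, Matrix.one_apply,
        Matrix.vecHead, Matrix.vecTail] <;>
      field_simp
  · intro i j h
    fin_cases i <;> fin_cases j <;>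
      first
        | exact absurd h (by decide)
        | simp [Matrix.vecHead, Matrix.vecTail]
  · intro i j h
    fin_cases i <;> fin_cases j <;>
      first
        | exact absurd h (by decide)
        | simp [Matrix.vecHead, Matrix.vecTail]
  · rw [pm1']
    ext i j
    fin_cases i <;> fin_cases j <;>
      simp [Matrix.mul_apply, Fin.sum_univ_four, Matrix.vecHead, Matrix.vecTail] <;>
      field_simp

lemma fwd_c (x₁ x₂ x₃ x₄ : ℝ)
    (h : InBruhatCell !![0, 1, 0, 0; 1, 0, 0, 0; x₁, x₂, 0, 1; x₃, x₄, 1, 0]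
      (finRotate 4)) :
    x₁ = 0 ∧ x₂ = 0 ∧ x₄ = 0 ∧ x₃ ≠ 0 := by
  obtain ⟨U₀, U₁, hu0, hu1, ht0, ht1, hM⟩ := h
  rw [pm2'] at hM
  have a10 : U₀ 1 0 = 0 := ht0 1 0 (by decide)
  have a20 : U₀ 2 0 = 0 := ht0 2 0 (by decide)
  have a21 : U₀ 2 1 = 0 := ht0 2 1 (by decide)
  have a30 : U₀ 3 0 = 0 := ht0 3 0 (by decide)
  have a31 : U₀ 3 1 = 0 := ht0 3 1 (by decide)
  have a32 : U₀ 3 2 = 0 := ht0 3 2 (by decide)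
  have b10 : U₁ 1 0 = 0 := ht1 1 0 (by decide)
  have b20 : U₁ 2 0 = 0 := ht1 2 0 (by decide)
  have b21 : U₁ 2 1 = 0 := ht1 2 1 (by decide)
  have b30 : U₁ 3 0 = 0 := ht1 3 0 (by decide)
  have b31 : U₁ 3 1 = 0 := ht1 3 1 (by decide)
  have b32 : U₁ 3 2 = 0 := ht1 3 2 (by decide)
  have E : ∀ i j : Fin 4, _ := fun i j => congrFun (congrFun hM i) j
  have e32 := E 3 2
  have e10 := E 1 0
  have e22 := E 2 2
  have e20 := E 2 0
  have e21 := E 2 1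
  have e11 := E 1 1
  have e31 := E 3 1
  have e30 := E 3 0
  simp [Matrix.mul_apply, Fin.sum_univ_four, Matrix.vecHead, Matrix.vecTail,
    a10, a20, a21, a30, a31, a32, b10, b20, b21, b30, b31, b32]
    at e32 e10 e22 e20 e21 e11 e31 e30
  -- e32 : 1 = U₀ 3 3 * U₁ 0 2
  have ha33 : U₀ 3 3 ≠ 0 := left_ne_zero_of_mul_eq_one e32.symm
  have hb02 : U₁ 0 2 ≠ 0 := right_ne_zero_of_mul_eq_one e32.symm
  -- e10 : 1 = U₀ 1 3 * U₁ 0 0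
  have ha13 : U₀ 1 3 ≠ 0 := left_ne_zero_of_mul_eq_one e10.symm
  have hb00 : U₁ 0 0 ≠ 0 := right_ne_zero_of_mul_eq_one e10.symm
  -- e22 : U₀ 2 3 = 0 ∨ U₁ 0 2 = 0
  have ha23 : U₀ 2 3 = 0 := e22.resolve_right hb02
  -- e11 : U₀ 1 3 = 0 ∨ U₁ 0 1 = 0
  have hb01 : U₁ 0 1 = 0 := e11.resolve_left ha13
  rw [ha23, zero_mul] at e20 e21
  rw [hb01, mul_zero] at e31
  refine ⟨e20, e21, e31, ?_⟩
  rw [e30]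
  exact mul_ne_zero ha33 hb00

lemma bwd_c (x₃ : ℝ) (hx₃ : x₃ ≠ 0) :
    InBruhatCell !![0, 1, 0, 0; 1, 0, 0, 0; 0, 0, 0, 1; x₃, 0, 1, 0]
      (finRotate 4) := by
  refine ⟨!![1,0,0,0;0,1,0,x₃⁻¹;0,0,1,0;0,0,0,1],
    !![x₃,0,1,0;0,1,0,0;0,0,-x₃⁻¹,0;0,0,0,1], ?_, ?_, ?_, ?_, ?_⟩
  · apply (Matrix.isUnit_iff_isUnit_det _).mpr <| Matrix.isUnit_det_of_right_inverse ?_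
      (B := !![1,0,0,0;0,1,0,-x₃⁻¹;0,0,1,0;0,0,0,1])
    ext i j
    fin_cases i <;> fin_cases j <;>
      simp [Matrix.mul_apply, Fin.sum_univ_four, Matrix.one_apply,
        Matrix.vecHead, Matrix.vecTail]
  · apply (Matrix.isUnit_iff_isUnit_det _).mpr <| Matrix.isUnit_det_of_right_inverse ?_
      (B := !![x₃⁻¹,0,1,0;0,1,0,0;0,0,-x₃,0;0,0,0,1])
    ext i j
    fin_cases i <;> fin_cases j <;>
      simp [Matrix.mul_apply, Fin.sum_univ_four, Matrix.one_apply,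
        Matrix.vecHead, Matrix.vecTail] <;>
      field_simp
  · intro i j h
    fin_cases i <;> fin_cases j <;>
      first
        | exact absurd h (by decide)
        | simp [Matrix.vecHead, Matrix.vecTail]
  · intro i j h
    fin_cases i <;> fin_cases j <;>
      first
        | exact absurd h (by decide)
        | simp [Matrix.vecHead, Matrix.vecTail]
  · rw [pm2']
    ext i j
    fin_cases i <;> fin_cases j <;>
      simp [Matrix.mul_apply, Fin.sum_univ_four, Matrix.vecHead, Matrix.vecTail] <;>
      field_simp

/-- Characterization of the Bruhat cells of the slice of matrices
`M = !![0,1,0,0; 1,0,0,0; x₁,x₂,0,1; x₃,x₄,1,0]`: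
(a) `M ∈ Bru_{(12)(34)}` iff `x₁ = x₂ = x₃ = x₄ = 0`;
(b) `M ∈ Bru_{ρ₁}` (with `ρ₁ : 1↦4, 2↦1, 3↦2, 4↦3`) iff
    `x₁ = x₃ = x₄ = 0` and `x₂ ≠ 0`;
(c) `M ∈ Bru_{ρ₂}` (with `ρ₂ : 1↦2, 2↦3, 3↦4, 4↦1`) iff
    `x₁ = x₂ = x₄ = 0` and `x₃ ≠ 0`. -/
theorem bruhat_cells_of_slice (x₁ x₂ x₃ x₄ : ℝ) :
    (InBruhatCell !![0, 1, 0, 0; 1, 0, 0, 0; x₁, x₂, 0, 1; x₃, x₄, 1, 0]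
        (Equiv.swap (0 : Fin 4) 1 * Equiv.swap (2 : Fin 4) 3) ↔
      x₁ = 0 ∧ x₂ = 0 ∧ x₃ = 0 ∧ x₄ = 0) ∧
    (InBruhatCell !![0, 1, 0, 0; 1, 0, 0, 0; x₁, x₂, 0, 1; x₃, x₄, 1, 0]
        (finRotate 4)⁻¹ ↔
      x₁ = 0 ∧ x₃ = 0 ∧ x₄ = 0 ∧ x₂ ≠ 0) ∧
    (InBruhatCell !![0, 1, 0, 0; 1, 0, 0, 0; x₁, x₂, 0, 1; x₃, x₄, 1, 0]
        (finRotate 4) ↔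
      x₁ = 0 ∧ x₂ = 0 ∧ x₄ = 0 ∧ x₃ ≠ 0) := by
  refine ⟨⟨fwd_a x₁ x₂ x₃ x₄, ?_⟩, ⟨fwd_b x₁ x₂ x₃ x₄, ?_⟩, ⟨fwd_c x₁ x₂ x₃ x₄, ?_⟩⟩
  · rintro ⟨rfl, rfl, rfl, rfl⟩
    exact bwd_a
  · rintro ⟨rfl, rfl, rfl, hx₂⟩
    exact bwd_b x₂ hx₂
  · rintro ⟨rfl, rfl, rfl, hx₃⟩
    exact bwd_c x₃ hx₃
end
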